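/- Let G be a group and let ḡ ∈ G^n, ḡ' ∈ G^{n'} be tuples. Then the concatenation ḡ·ḡ' is braid-equivalent to ((ḡ')^{πḡ})·ḡ and also braid-equivalent to ḡ'·(ḡ^{(πḡ')^{−1}}). -/

import Mathlib

/-- One Hurwitz braid move: replace adjacent entries `a, b` by `a*b*a⁻¹, a`. -/
inductive BraidMove (G : Type*) [Group G] : List G → List G → Prop
  | mk (l₁ l₂ : List G) (a b : G) :
      BraidMove G (l₁ ++ a :: b :: l₂) (l₁ ++ (a * b * a⁻¹) :: a :: l₂)

/-- Braid equivalence of tuples: the equivalence relation generated by Hurwitz moves. -/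
def BraidEquiv (G : Type*) [Group G] : List G → List G → Prop :=
  Relation.EqvGen (BraidMove G)

/-- Componentwise conjugation of a tuple: `ḡ^h = (h g₁ h⁻¹, …, h gₙ h⁻¹)`. -/
def conjList {G : Type*} [Group G] (h : G) (l : List G) : List G :=
  l.map fun x => h * x * h⁻¹

lemma braidMove_context {G : Type*} [Group G] {t t' : List G} (l₁ l₂ : List G)
    (h : BraidMove G t t') : BraidMove G (l₁ ++ t ++ l₂) (l₁ ++ t' ++ l₂) := by
  cases h with
  | mk m₁ m₂ a b =>
    have h1 : l₁ ++ (m₁ ++ a :: b :: m₂) ++ l₂ = (l₁ ++ m₁) ++ a :: b :: (m₂ ++ l₂) := by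
      simp
    have h2 : l₁ ++ (m₁ ++ (a * b * a⁻¹) :: a :: m₂) ++ l₂
        = (l₁ ++ m₁) ++ (a * b * a⁻¹) :: a :: (m₂ ++ l₂) := by simp
    rw [h1, h2]
    exact BraidMove.mk _ _ a b

lemma braidEquiv_context {G : Type*} [Group G] {t t' : List G} (l₁ l₂ : List G)
    (h : BraidEquiv G t t') : BraidEquiv G (l₁ ++ t ++ l₂) (l₁ ++ t' ++ l₂) := by
  induction h with
  | rel x y hxy => exact Relation.EqvGen.rel _ _ (braidMove_context l₁ l₂ hxy)
  | refl x => exact Relation.EqvGen.refl _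
  | symm x y _ ih => exact Relation.EqvGen.symm _ _ ih
  | trans x y z _ _ ih1 ih2 => exact Relation.EqvGen.trans _ _ _ ih1 ih2

lemma braidEquiv_single {G : Type*} [Group G] (a : G) (l : List G) :
    BraidEquiv G (a :: l) (conjList a l ++ [a]) := by
  induction l with
  | nil => exact Relation.EqvGen.refl _
  | cons b l ih =>
    have h1 : BraidEquiv G (a :: b :: l) ((a * b * a⁻¹) :: a :: l) :=
      Relation.EqvGen.rel _ _ (BraidMove.mk [] l a b)
    have h2 : BraidEquiv G ((a * b * a⁻¹) :: a :: l)
        ((a * b * a⁻¹) :: (conjList a l ++ [a])) := by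
      have := braidEquiv_context [a * b * a⁻¹] [] ih
      simpa using this
    have : conjList a (b :: l) ++ [a] = (a * b * a⁻¹) :: (conjList a l ++ [a]) := by
      simp [conjList]
    rw [this]
    exact Relation.EqvGen.trans _ _ _ h1 h2

lemma conjList_conjList {G : Type*} [Group G] (h₁ h₂ : G) (l : List G) :
    conjList h₁ (conjList h₂ l) = conjList (h₁ * h₂) l := by
  simp [conjList, List.map_map, Function.comp, mul_assoc]

lemma braidEquiv_append {G : Type*} [Group G] (g g' : List G) :
    BraidEquiv G (g ++ g') (conjList g.prod g' ++ g) := by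
  induction g with
  | nil => simp [conjList]; exact Relation.EqvGen.refl _
  | cons a rest ih =>
    have h1 : BraidEquiv G (a :: (rest ++ g')) (a :: (conjList rest.prod g' ++ rest)) := by
      have := braidEquiv_context [a] [] ih
      simpa using this
    have h2 : BraidEquiv G ((a :: conjList rest.prod g') ++ rest)
        ((conjList a (conjList rest.prod g') ++ [a]) ++ rest) := by
      have := braidEquiv_context [] rest (braidEquiv_single a (conjList rest.prod g'))
      simpa using this
    have e1 : a :: (conjList rest.prod g' ++ rest) = (a :: conjList rest.prod g') ++ rest := by
      simp
    have e2 : (conjList a (conjList rest.prod g') ++ [a]) ++ rest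
        = conjList (a :: rest).prod g' ++ (a :: rest) := by
      rw [conjList_conjList]; simp
    have := Relation.EqvGen.trans _ _ _ h1 (e1 ▸ h2)
    rw [e2] at this
    unfold BraidEquiv
    simpa using this

theorem braidEquiv_append_comm_conj {G : Type*} [Group G] (g g' : List G) :
    BraidEquiv G (g ++ g') (conjList g.prod g' ++ g) ∧
      BraidEquiv G (g ++ g') (g' ++ conjList g'.prod⁻¹ g) := by
  refine ⟨braidEquiv_append g g', ?_⟩
  have h := braidEquiv_append g' (conjList g'.prod⁻¹ g)
  have e : conjList g'.prod (conjList g'.prod⁻¹ g) = g := by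
    rw [conjList_conjList]; simp [conjList]
  rw [e] at h
  exact Relation.EqvGen.symm _ _ h
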